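/- Let G be a finite directed graph with zero reciprocity and no triangles (no vertex triple u,v,w with (u,v),(v,w),(u,w) all in E). Then for all vertices u,v,w with (u,v),(v,w) ∈ E, the Node2vec second-order transition probability from v to w given previous vertex u equals the first-order random-walk transition probability from v to w: P̲(u,v,w) = P(v,w), where P(v,w) = 1/outdeg(v) if (v,w) ∈ E and 0 otherwise, and P̲(u,v,w) = T(u→v→w)/Σ_{w'} T(u→v→w'). -/
import Mathlib


open Finset

/-- Node2vec unnormalized second-order transition weight. -/
noncomputable def n2vWeight {V : Type*} [DecidableEq V] (E : V → V → Prop) [DecidableRel E]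
    (p q : ℝ) (u v w : V) : ℝ :=
  if E u v ∧ E v w then
    if u = w then 1 / p
    else if E u w then 1
    else 1 / q
  else 0

/-- Out-degree in a finite directed graph. -/
def outdeg {V : Type*} [Fintype V] (E : V → V → Prop) [DecidableRel E] (v : V) : ℕ :=
  (Finset.univ.filter (fun w => E v w)).card

/-- First-order random-walk transition probability. -/
noncomputable def rwProb {V : Type*} [Fintype V] (E : V → V → Prop) [DecidableRel E]
    (v w : V) : ℝ :=
  if E v w then 1 / (outdeg E v : ℝ) else 0

/-- Node2vec second-order transition probability. -/
noncomputable def n2vProb {V : Type*} [Fintype V] [DecidableEq V]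
    (E : V → V → Prop) [DecidableRel E] (p q : ℝ) (u v w : V) : ℝ :=
  n2vWeight E p q u v w / ∑ w' : V, n2vWeight E p q u v w'

theorem n2v_reduces_to_first_order {V : Type*} [Fintype V] [DecidableEq V]
    (E : V → V → Prop) [DecidableRel E] (p q : ℝ) (hp : 0 < p) (hq : 0 < q)
    (hout : ∀ v, (∃ u, E u v) → 0 < outdeg E v)
    (hrec : ∀ u v, E u v → ¬ E v u)
    (htri : ∀ u v w, E u v → E v w → ¬ E u w) :
    ∀ u v w, E u v → E v w → n2vProb E p q u v w = rwProb E v w := by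
  intro u v w huv hvw
  have key : ∀ w', n2vWeight E p q u v w' = if E v w' then 1/q else 0 := by
    intro w'
    unfold n2vWeight
    by_cases h : E v w'
    · simp only [huv, h, and_self, if_true]
      have hne : u ≠ w' := by
        rintro rfl
        exact hrec u v huv h
      have hnE : ¬ E u w' := htri u v w' huv h
      simp [hne, hnE]
    · simp [h]
  have hsum : ∑ w' : V, n2vWeight E p q u v w' = (outdeg E v : ℝ) * (1/q) := by
    simp only [key]
    rw [Finset.sum_ite, Finset.sum_const, Finset.sum_const]
    simp [outdeg, mul_comm]
  have hdeg : 0 < outdeg E v := hout v ⟨u, huv⟩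
  have hdeg' : (0:ℝ) < (outdeg E v : ℝ) := by exact_mod_cast hdeg
  unfold n2vProb rwProb
  rw [key, hsum]
  simp only [hvw, if_true]
  field_simp
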